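/- Let h : R^m → R^n be differentiable with L-Lipschitz continuous derivative, let x, d ∈ R^m, and define ψ(x) = ½‖h(x)‖². If ‖Dh(y)‖ ≤ L₀ for all y on the segment [x, x+d], then ψ(x + d) ≤ ψ(x) + ⟨∇ψ(x), d⟩ + (½L₀² + ½L²‖d‖² + (‖h(x)‖ + L₀‖d‖)·L)‖d‖², where ∇ψ(x) is the gradient of ψ at x. -/
import Mathlib


open scoped RealInnerProductSpace

set_option maxHeartbeats 1000000 in
/-- Descent-type estimate: if `Dh` is `L`-Lipschitz and `‖Dh(y)‖ ≤ L₀` on the segment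
`[x, x+d]`, then for `ψ(x) = ½‖h x‖²` one has
`ψ(x+d) ≤ ψ(x) + ⟪∇ψ(x), d⟫ + (½L₀² + ½L²‖d‖² + (‖h x‖ + L₀‖d‖)L)‖d‖²`. -/
theorem lm_descent_estimate {m n : ℕ}
    (h : EuclideanSpace ℝ (Fin m) → EuclideanSpace ℝ (Fin n))
    (hdiff : Differentiable ℝ h) (L L₀ : ℝ)
    (hLip : ∀ u v, ‖fderiv ℝ h u - fderiv ℝ h v‖ ≤ L * ‖u - v‖)
    (x d : EuclideanSpace ℝ (Fin m))
    (hL₀ : ∀ t ∈ Set.Icc (0 : ℝ) 1, ‖fderiv ℝ h (x + t • d)‖ ≤ L₀)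
    (ψ : EuclideanSpace ℝ (Fin m) → ℝ)
    (hψ : ∀ y, ψ y = (1 / 2) * ‖h y‖ ^ 2) :
    ψ (x + d) ≤ ψ x + ⟪ContinuousLinearMap.adjoint (fderiv ℝ h x) (h x), d⟫ +
      ((1 / 2) * L₀ ^ 2 + (1 / 2) * L ^ 2 * ‖d‖ ^ 2 + (‖h x‖ + L₀ * ‖d‖) * L) * ‖d‖ ^ 2 := by
  rcases eq_or_ne d 0 with rfl | hd0
  · simp [hψ]
  have hL : 0 ≤ L := by
    have h1 := hLip (x + d) x
    have h2 : (0:ℝ) ≤ ‖fderiv ℝ h (x + d) - fderiv ℝ h x‖ := norm_nonneg _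
    have h3 : ‖x + d - x‖ = ‖d‖ := by simp
    have hdpos : (0:ℝ) < ‖d‖ := norm_pos_iff.mpr hd0
    nlinarith
  have hL₀0 : (0:ℝ) ≤ L₀ := le_trans (norm_nonneg _) (by simpa using hL₀ 0 ⟨le_refl 0, zero_le_one⟩)
  set s := segment ℝ x (x + d) with hs
  have hmem : ∀ y ∈ s, ∃ t ∈ Set.Icc (0:ℝ) 1, y = x + t • d := by
    intro y hy
    rw [hs, segment_eq_image'] at hy
    obtain ⟨t, ht, hty⟩ := hy
    exact ⟨t, ht, by simpa [add_sub_cancel_left] using hty.symm⟩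
  have hxs : x ∈ s := left_mem_segment ℝ x (x + d)
  have hys : x + d ∈ s := right_mem_segment ℝ x (x + d)
  set A := fderiv ℝ h x with hA
  -- Taylor remainder bound
  have hr : ‖h (x + d) - h x - A (x + d - x)‖ ≤ L * ‖d‖ * ‖x + d - x‖ := by
    apply Convex.norm_image_sub_le_of_norm_fderiv_le' (fun y _ => hdiff y) _
      (convex_segment x (x+d)) hxs hys
    intro y hy
    obtain ⟨t, ht, rfl⟩ := hmem y hy
    calc ‖fderiv ℝ h (x + t • d) - A‖ ≤ L * ‖x + t • d - x‖ := hLip _ _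
      _ ≤ L * ‖d‖ := by
          have : ‖x + t • d - x‖ = |t| * ‖d‖ := by simp [norm_smul]
          rw [this]
          have : |t| ≤ 1 := abs_le.mpr ⟨by linarith [ht.1], ht.2⟩
          nlinarith [mul_nonneg hL (norm_nonneg d), abs_nonneg t]
  have hAnorm : ‖A‖ ≤ L₀ := by simpa using hL₀ 0 ⟨le_refl 0, zero_le_one⟩
  set r := h (x + d) - h x - A d with hrdef
  have hrb : ‖r‖ ≤ L * ‖d‖ ^ 2 := by
    have : x + d - x = d := by abel
    rw [this] at hr
    calc ‖r‖ ≤ L * ‖d‖ * ‖d‖ := hr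
      _ = L * ‖d‖ ^ 2 := by ring
  have hAd : ‖A d‖ ≤ L₀ * ‖d‖ := le_trans (A.le_opNorm d) (by
    have := norm_nonneg d; nlinarith)
  have hdecomp : h (x + d) = h x + (A d + r) := by rw [hrdef]; abel
  have hexp : ‖h (x + d)‖ ^ 2 = ‖h x‖ ^ 2 + 2 * ⟪h x, A d + r⟫ + ‖A d + r‖ ^ 2 := by
    rw [hdecomp]; exact norm_add_sq_real _ _
  have hadj : ⟪h x, A d⟫ = ⟪ContinuousLinearMap.adjoint A (h x), d⟫ :=
    (ContinuousLinearMap.adjoint_inner_left A d (h x)).symm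
  have hinner_r : ⟪h x, r⟫ ≤ ‖h x‖ * (L * ‖d‖ ^ 2) := by
    calc ⟪h x, r⟫ ≤ ‖h x‖ * ‖r‖ := real_inner_le_norm _ _
      _ ≤ ‖h x‖ * (L * ‖d‖ ^ 2) := by
          have := norm_nonneg (h x); nlinarith
  have hsq : ‖A d + r‖ ^ 2 ≤ (L₀ * ‖d‖ + L * ‖d‖ ^ 2) ^ 2 := by
    have h1 : ‖A d + r‖ ≤ L₀ * ‖d‖ + L * ‖d‖ ^ 2 :=
      le_trans (norm_add_le _ _) (add_le_add hAd hrb)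
    nlinarith [norm_nonneg (A d + r)]
  have hinadd : ⟪h x, A d + r⟫ = ⟪h x, A d⟫ + ⟪h x, r⟫ := by rw [inner_add_right]
  rw [hψ, hψ, hexp, hinadd, hadj]
  nlinarith [norm_nonneg d, norm_nonneg (h x)]
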